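/- arXiv:2204.00583 — 3 statements merged into one kernel-verified Lean document; each statement's English description precedes it below -/
import Mathlib

section
/- Let α, β, γ > 0, c ≤ 0, and F : ℝ → ℝ differentiable with 0 ≤ F ≤ 1 and F' ≥ 0. Then for every (A,R) in D₁ = {(A,R) ∈ [0,1]² : A + R ≤ 1}, the divergence of the vector field (A,R) ↦ (-β·A + α·F(c·A+Q)·(1-A-R), -γ·R + β·A) is strictly negative. (This is the inhibitory case of the no-cycles criterion: c ≤ 0 automatically gives negative divergence without any condition on sup F'.) -/
/-- Inhibitory case (`c ≤ 0`): the divergence of the single-population mean-field vector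
field is strictly negative everywhere on `D₁`, with no condition on `sup F'`. -/
theorem mean_field_divergence_inhibitory
    (α β γ c Q : ℝ) (hα : 0 < α) (hβ : 0 < β) (hγ : 0 < γ) (hc : c ≤ 0)
    (F F' : ℝ → ℝ) (hF : ∀ y, HasDerivAt F (F' y) y)
    (hF0 : ∀ y, 0 ≤ F y) (hF1 : ∀ y, F y ≤ 1) (hF'0 : ∀ y, 0 ≤ F' y)
    (A R : ℝ) (hA : A ∈ Set.Icc (0:ℝ) 1) (hR : R ∈ Set.Icc (0:ℝ) 1) (hAR : A + R ≤ 1) :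
    HasDerivAt (fun a => -β * a + α * F (c * a + Q) * (1 - a - R))
      (-β - α * F (c * A + Q) + α * c * F' (c * A + Q) * (1 - A - R)) A ∧
    HasDerivAt (fun r => -γ * r + β * A) (-γ) R ∧
    (-β - α * F (c * A + Q) + α * c * F' (c * A + Q) * (1 - A - R)) + (-γ) < 0 := by
  refine ⟨?_, ?_, ?_⟩
  · have hinner : HasDerivAt (fun a : ℝ => c * a + Q) c A := by
      simpa using ((hasDerivAt_id A).const_mul c).add_const Q
    have hcomp : HasDerivAt (fun a : ℝ => F (c * a + Q)) (F' (c * A + Q) * c) A :=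
      (hF (c * A + Q)).comp A hinner
    have h1 : HasDerivAt (fun a : ℝ => α * F (c * a + Q)) (α * (F' (c * A + Q) * c)) A :=
      hcomp.const_mul α
    have h2 : HasDerivAt (fun a : ℝ => 1 - a - R) (-1) A := by
      simpa using ((hasDerivAt_id A).const_sub 1).sub_const R
    have h3 := ((hasDerivAt_id A).const_mul (-β)).add (h1.mul h2)
    refine h3.congr_deriv ?_
    ring
  · simpa using ((hasDerivAt_id R).const_mul (-γ)).add_const (β * A)
  · have hS : 0 ≤ 1 - A - R := by linarith
    have h4 : α * c * F' (c * A + Q) * (1 - A - R) ≤ 0 := by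
      have := mul_nonneg (mul_nonneg hα.le (hF'0 (c * A + Q))) hS
      nlinarith
    have h5 : 0 ≤ α * F (c * A + Q) := mul_nonneg hα.le (hF0 _)
    linarith
end

section
/- By the Bendixson–Dulac criterion, if β + γ > α·c·sup F' (with α, β, γ > 0, F differentiable, nondecreasing, 0 ≤ F ≤ 1, F' bounded), then the planar system A' = -β·A + α·F(c·A+Q)·(1-A-R), R' = -γ·R + β·A has no nonconstant periodic orbit contained in the simply connected region D₁ = {(A,R) : 0 ≤ A, 0 ≤ R, A + R ≤ 1}. -/
/-- Auxiliary: the RHS of the second-order (Liénard-type) equation for `R`,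
as a function of `r = R` and `p = R'`. -/
noncomputable def mfN (α β γ c Q : ℝ) (F : ℝ → ℝ) (r p : ℝ) : ℝ :=
  β * (α * F (c * ((p + γ * r) / β) + Q)) * (1 - (p + γ * r) / β - r)

/-- Auxiliary: base point used to define the comparison function `mfg`. -/
noncomputable def mfPi (β γ : ℝ) (r : ℝ) : ℝ := min 0 (β * (1 - r) - γ * r)

/-- Auxiliary: the comparison function (a function of `r` alone). -/
noncomputable def mfg (α β γ c Q K : ℝ) (F : ℝ → ℝ) (r : ℝ) : ℝ :=
  mfN α β γ c Q F r (mfPi β γ r) - K * mfPi β γ r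

lemma mfN_hasDerivAt (α β γ c Q : ℝ) (hβ : 0 < β) (F F' : ℝ → ℝ)
    (hF : ∀ y, HasDerivAt F (F' y) y) (r p : ℝ) :
    HasDerivAt (fun q => mfN α β γ c Q F r q)
      (α * c * F' (c * ((p + γ * r) / β) + Q) * (1 - (p + γ * r) / β - r)
        - α * F (c * ((p + γ * r) / β) + Q)) p := by
  have hu : HasDerivAt (fun q : ℝ => (q + γ * r) / β) (1 / β) p := by
    simpa using ((hasDerivAt_id p).add_const (γ * r)).div_const β
  have hB : HasDerivAt (fun q : ℝ => c * ((q + γ * r) / β) + Q) (c * (1 / β)) p :=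
    (hu.const_mul c).add_const Q
  have hFB : HasDerivAt (fun q : ℝ => F (c * ((q + γ * r) / β) + Q))
      (F' (c * ((p + γ * r) / β) + Q) * (c * (1 / β))) p := (hF _).comp p hB
  have hS : HasDerivAt (fun q : ℝ => 1 - (q + γ * r) / β - r) (-(1 / β)) p := by
    simpa using (((hasDerivAt_const p (1:ℝ)).sub hu).sub_const r)
  have hmain := (hFB.const_mul (β * α)).mul hS
  have hfe : (fun q => mfN α β γ c Q F r q)
      = fun q => (β * α * F (c * ((q + γ * r) / β) + Q)) * (1 - (q + γ * r) / β - r) := by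
    funext q; unfold mfN; ring
  rw [hfe]
  convert hmain using 1
  · rfl
  · rfl
  · rfl
  · have h1β : β * (1 / β) = 1 := mul_one_div_cancel hβ.ne'
    set fa : ℝ := F' (c * ((p + γ * r) / β) + Q)
    set fb : ℝ := F (c * ((p + γ * r) / β) + Q)
    set sS : ℝ := 1 - (p + γ * r) / β - r
    linear_combination (-(α * c * fa * sS - α * fb)) * h1β

lemma mfN_key (α β γ c Q M K : ℝ) (hα : 0 < α) (hβ : 0 < β) (hγ : 0 < γ)
    (F F' : ℝ → ℝ) (hF : ∀ y, HasDerivAt F (F' y) y)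
    (hF0 : ∀ y, 0 ≤ F y) (hF'0 : ∀ y, 0 ≤ F' y) (hM : ∀ y, F' y ≤ M)
    (hK : K = max 0 (α * c * M))
    (r : ℝ) (hr0 : 0 ≤ r) (p : ℝ) (hp1 : -(γ * r) ≤ p) (hp2 : p ≤ β * (1 - r) - γ * r) :
    (mfN α β γ c Q F r p - mfg α β γ c Q K F r) * p ≤ K * p ^ 2 := by
  set top := β * (1 - r) - γ * r with htopdef
  have htop : -(γ * r) ≤ top := hp1.trans hp2
  -- derivative of the comparison function
  have hd : ∀ x : ℝ, HasDerivAt (fun q => mfN α β γ c Q F r q - K * q)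
      (α * c * F' (c * ((x + γ * r) / β) + Q) * (1 - (x + γ * r) / β - r)
        - α * F (c * ((x + γ * r) / β) + Q) - K) x := by
    intro x
    exact (mfN_hasDerivAt α β γ c Q hβ F F' hF r x).sub
      (by simpa using (hasDerivAt_id x).const_mul K)
  have hanti : AntitoneOn (fun q => mfN α β γ c Q F r q - K * q) (Set.Icc (-(γ * r)) top) := by
    apply antitoneOn_of_deriv_nonpos (convex_Icc _ _)
    · exact fun x _ => ((hd x).continuousAt).continuousWithinAt
    · exact fun x _ => ((hd x).differentiableAt).differentiableWithinAt
    · intro x hx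
      rw [interior_Icc] at hx
      rw [(hd x).deriv]
      set u := (x + γ * r) / β with hudef
      have hu0 : 0 ≤ u := by
        apply div_nonneg _ hβ.le
        linarith [hx.1]
      have hu1 : u ≤ 1 - r := by
        rw [hudef, div_le_iff₀ hβ]
        nlinarith [hx.2]
      have hS0 : 0 ≤ 1 - u - r := by linarith
      have hS1 : 1 - u - r ≤ 1 := by linarith
      have hcf : α * c * F' (c * u + Q) * (1 - u - r) ≤ K := by
        rcases le_or_gt 0 c with hc | hc
        · have h1 : F' (c * u + Q) * (1 - u - r) ≤ M :=
            le_trans (mul_le_of_le_one_right (hF'0 _) hS1) (hM _)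
          have h2 : α * c * (F' (c * u + Q) * (1 - u - r)) ≤ α * c * M :=
            mul_le_mul_of_nonneg_left h1 (by positivity)
          calc α * c * F' (c * u + Q) * (1 - u - r)
              = α * c * (F' (c * u + Q) * (1 - u - r)) := by ring
            _ ≤ α * c * M := h2
            _ ≤ K := hK ▸ le_max_right _ _
        · have h1 : 0 ≤ α * (F' (c * u + Q) * (1 - u - r)) :=
            mul_nonneg hα.le (mul_nonneg (hF'0 _) hS0)
          have h2 : α * c * F' (c * u + Q) * (1 - u - r) ≤ 0 := by nlinarith [mul_nonneg h1 (neg_nonneg.2 hc.le)]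
          exact h2.trans (hK ▸ le_max_left _ _)
      have hFnn : 0 ≤ α * F (c * u + Q) := mul_nonneg hα.le (hF0 _)
      linarith
  have hπ1 : -(γ * r) ≤ mfPi β γ r := by
    apply le_min _ htop
    have : 0 ≤ γ * r := mul_nonneg hγ.le hr0
    linarith
  have hπmem : mfPi β γ r ∈ Set.Icc (-(γ * r)) top := ⟨hπ1, min_le_right _ _⟩
  have hpmem : p ∈ Set.Icc (-(γ * r)) top := ⟨hp1, hp2⟩
  rcases le_or_gt p 0 with hp | hp
  · have hple : p ≤ mfPi β γ r := le_min hp hp2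
    have hmono := hanti hpmem hπmem hple
    simp only at hmono
    have hd0 : 0 ≤ (mfN α β γ c Q F r p - K * p) - (mfN α β γ c Q F r (mfPi β γ r) - K * mfPi β γ r) := by
      linarith
    unfold mfg
    nlinarith [mul_nonneg hd0 (neg_nonneg.2 hp)]
  · have htop0 : (0:ℝ) ≤ top := le_of_lt (lt_of_lt_of_le hp hp2)
    have hπ0 : mfPi β γ r = 0 := min_eq_left htop0
    have h0mem : (0:ℝ) ∈ Set.Icc (-(γ * r)) top := by
      constructor
      · have : 0 ≤ γ * r := mul_nonneg hγ.le hr0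
        linarith
      · exact htop0
    have hmono := hanti h0mem hpmem hp.le
    simp only at hmono
    have hd0 : 0 ≤ (mfN α β γ c Q F r 0 - K * 0) - (mfN α β γ c Q F r p - K * p) := by
      linarith
    unfold mfg
    rw [hπ0]
    nlinarith [mul_nonneg hd0 hp.le]

/-- Bendixson--Dulac criterion applied to the mean-field system: if
`β + γ > α·c·sup F'`, then there is no nonconstant periodic orbit contained in
`D₁ = {(A,R) : 0 ≤ A, 0 ≤ R, A + R ≤ 1}`. -/
theorem mean_field_no_periodic_orbit
    (α β γ c Q M : ℝ) (hα : 0 < α) (hβ : 0 < β) (hγ : 0 < γ)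
    (F F' : ℝ → ℝ) (hF : ∀ y, HasDerivAt F (F' y) y)
    (hF0 : ∀ y, 0 ≤ F y) (hF1 : ∀ y, F y ≤ 1)
    (hF'0 : ∀ y, 0 ≤ F' y) (hMsup : IsLUB (Set.range F') M)
    (hcond : β + γ > α * c * M)
    (A R : ℝ → ℝ)
    (hAode : ∀ t, HasDerivAt A (-β * A t + α * F (c * A t + Q) * (1 - A t - R t)) t)
    (hRode : ∀ t, HasDerivAt R (-γ * R t + β * A t) t)
    (hdom : ∀ t, 0 ≤ A t ∧ 0 ≤ R t ∧ A t + R t ≤ 1)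
    (T : ℝ) (hT : 0 < T) (hper : ∀ t, A (t + T) = A t ∧ R (t + T) = R t) :
    ∀ t s : ℝ, A t = A s ∧ R t = R s := by
  have hM : ∀ y, F' y ≤ M := fun y => hMsup.1 ⟨y, rfl⟩
  set K := max 0 (α * c * M) with hKdef
  have hKlt : K < β + γ := max_lt (by linarith) (by linarith)
  have hcontF : Continuous F := by
    rw [continuous_iff_continuousAt]; exact fun y => (hF y).continuousAt
  have hcontg : Continuous (mfg α β γ c Q K F) := by
    unfold mfg mfN mfPi
    fun_prop
  set g : ℝ → ℝ := mfg α β γ c Q K F with hgdef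
  set G : ℝ → ℝ := fun x => ∫ u in (0:ℝ)..x, g u with hGdef
  have hG : ∀ x, HasDerivAt G (g x) x := fun x =>
    (hcontg.integral_hasStrictDerivAt 0 x).hasDerivAt
  set v : ℝ → ℝ := fun t => β * A t - γ * R t with hvdef
  have hvAt : ∀ t, HasDerivAt v
      (β * (-β * A t + α * F (c * A t + Q) * (1 - A t - R t)) - γ * (-γ * R t + β * A t)) t :=
    fun t => ((hAode t).const_mul β).sub ((hRode t).const_mul γ)
  have hveq : ∀ t, v t = β * A t - γ * R t := fun t => rfl
  set Y : ℝ → ℝ := fun t => v t ^ 2 / 2 + β * γ * (R t ^ 2 / 2) - G (R t) with hYdef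
  set E : ℝ → ℝ := fun t =>
      v t * (β * (-β * A t + α * F (c * A t + Q) * (1 - A t - R t)) - γ * (-γ * R t + β * A t))
      + β * γ * (R t * (-γ * R t + β * A t)) - g (R t) * (-γ * R t + β * A t) with hEdef
  have hYD : ∀ t, HasDerivAt Y (E t) t := by
    intro t
    have h1 := ((hvAt t).pow 2).div_const 2
    have h2 := (((hRode t).pow 2).div_const 2).const_mul (β * γ)
    have h3 : HasDerivAt (fun t => G (R t)) (g (R t) * (-γ * R t + β * A t)) t :=
      (hG (R t)).comp t (hRode t)
    have hfull := (h1.add h2).sub h3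
    have hfull' : HasDerivAt Y _ t := hfull
    convert hfull' using 1
    simp only [hEdef]
    push_cast
    ring
  have hNt : ∀ t, mfN α β γ c Q F (R t) (v t)
      = β * (α * F (c * A t + Q)) * (1 - A t - R t) := by
    intro t
    have hAe : (v t + γ * R t) / β = A t := by
      rw [hveq]
      field_simp
      ring
    unfold mfN
    rw [hAe]
  have hkey : ∀ t, (mfN α β γ c Q F (R t) (v t) - g (R t)) * v t ≤ K * v t ^ 2 := by
    intro t
    obtain ⟨hA0, hR0, hAR⟩ := hdom t
    apply mfN_key α β γ c Q M K hα hβ hγ F F' hF hF0 hF'0 hM hKdef (R t) hR0 (v t)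
    · rw [hveq]
      nlinarith [mul_nonneg hβ.le hA0]
    · rw [hveq]
      nlinarith [mul_le_mul_of_nonneg_left (show A t ≤ 1 - R t by linarith) hβ.le]
  have hE_le : ∀ t, E t ≤ -(β + γ - K) * v t ^ 2 := by
    intro t
    have h := hkey t
    rw [hNt t] at h
    have hEeq : E t = (β * (α * F (c * A t + Q)) * (1 - A t - R t) - g (R t)) * v t
        - (β + γ) * v t ^ 2 := by
      show v t * (β * (-β * A t + α * F (c * A t + Q) * (1 - A t - R t)) - γ * (-γ * R t + β * A t))
        + β * γ * (R t * (-γ * R t + β * A t)) - g (R t) * (-γ * R t + β * A t)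
        = (β * (α * F (c * A t + Q)) * (1 - A t - R t) - g (R t)) * v t - (β + γ) * v t ^ 2
      rw [hveq]
      ring
    rw [hEeq]
    linarith
  have hanti : Antitone Y := by
    apply antitone_of_deriv_nonpos (fun t => (hYD t).differentiableAt)
    intro t
    rw [(hYD t).deriv]
    have := hE_le t
    nlinarith [sq_nonneg (v t)]
  have hYper : ∀ t, Y (t + T) = Y t := by
    intro t
    simp only [hYdef, hvdef, (hper t).1, (hper t).2]
  have hYn : ∀ (n : ℕ) (t : ℝ), Y (t + n * T) = Y t := by
    intro n
    induction n with
    | zero => intro t; simp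
    | succ n ih =>
      intro t
      have h1 : t + (↑(n + 1) : ℝ) * T = (t + T) + n * T := by push_cast; ring
      rw [h1, ih, hYper]
  have hYle : ∀ a b : ℝ, Y b ≤ Y a := by
    intro a b
    obtain ⟨n, hn⟩ := exists_nat_ge ((a - b) / T)
    have hab : a ≤ b + n * T := by
      rw [div_le_iff₀ hT] at hn
      linarith
    calc Y b = Y (b + n * T) := (hYn n b).symm
      _ ≤ Y a := hanti hab
  have hYconst : ∀ t s, Y t = Y s := fun t s => le_antisymm (hYle s t) (hYle t s)
  have hE0 : ∀ t, E t = 0 := by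
    intro t
    have hYc : Y = fun _ => Y 0 := funext fun s => hYconst s 0
    have h0 : HasDerivAt Y 0 t := by rw [hYc]; exact hasDerivAt_const _ _
    exact (hYD t).unique h0
  have hv0 : ∀ t, v t = 0 := by
    intro t
    have h1 := hE_le t
    rw [hE0 t] at h1
    have h2 : v t ^ 2 = 0 := le_antisymm (by nlinarith) (sq_nonneg _)
    exact pow_eq_zero_iff two_ne_zero |>.mp h2
  have hR0 : ∀ t, HasDerivAt R 0 t := by
    intro t
    have h := hRode t
    have he : -γ * R t + β * A t = 0 := by
      have hv := hv0 t
      rw [hveq] at hv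
      linarith
    rwa [he] at h
  have hRconst : ∀ t s, R t = R s :=
    is_const_of_deriv_eq_zero (fun t => (hR0 t).differentiableAt) (fun t => (hR0 t).deriv)
  intro t s
  refine ⟨?_, hRconst t s⟩
  have ht := hv0 t
  have hs := hv0 s
  rw [hveq] at ht hs
  have hRts := hRconst t s
  rw [hRts] at ht
  have : β * A t = β * A s := by linarith
  exact mul_left_cancel₀ hβ.ne' this
end

section
/- For a single excitatory population with sigmoidal response F(y) = 1/(1 + exp(-(y-θ)/s)), the mean-field system A' = -β·A + α·F(c·A+Q)·(1-A-R), R' = -γ·R + β·A has no periodic orbit in D₁ = {(A,R) ∈ [0,1]² : A+R ≤ 1} whenever β + γ > α·c/(4s). -/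
private noncomputable def sigFn (θ s y : ℝ) : ℝ := 1 / (1 + Real.exp (-((y - θ) / s)))

private noncomputable def sigFn' (θ s y : ℝ) : ℝ :=
  Real.exp (-((y - θ) / s)) / (s * (1 + Real.exp (-((y - θ) / s))) ^ 2)

private lemma sigFn_pos (θ s y : ℝ) : 0 < sigFn θ s y := by
  unfold sigFn; positivity

private lemma sigFn'_nonneg (θ s : ℝ) (hs : 0 < s) (y : ℝ) : 0 ≤ sigFn' θ s y := by
  unfold sigFn'; positivity

private lemma sigFn'_le (θ s : ℝ) (hs : 0 < s) (y : ℝ) : sigFn' θ s y ≤ 1 / (4 * s) := by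
  unfold sigFn'
  set E := Real.exp (-((y - θ) / s)) with hE
  have hEpos : 0 < E := Real.exp_pos _
  rw [div_le_div_iff₀ (by positivity) (by positivity)]
  nlinarith [mul_nonneg hs.le (sq_nonneg (1 - E))]

private lemma sigFn_continuous (θ s : ℝ) : Continuous (sigFn θ s) := by
  unfold sigFn
  apply Continuous.div continuous_const
  · fun_prop
  · intro y; positivity

private lemma sigFn_hasDerivAt (θ s : ℝ) (hs : 0 < s) (y : ℝ) :
    HasDerivAt (sigFn θ s) (sigFn' θ s y) y := by
  have hden : (0:ℝ) < 1 + Real.exp (-((y - θ) / s)) := by positivity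
  have h1 : HasDerivAt (fun x : ℝ => -((x - θ) / s)) (-(1 / s)) y := by
    simpa using (((hasDerivAt_id y).sub_const θ).div_const s).fun_neg
  have h2 := (h1.exp.const_add 1).fun_inv (ne_of_gt hden)
  have h3 : HasDerivAt (sigFn θ s)
      (-(Real.exp (-((y - θ) / s)) * -(1 / s)) / (1 + Real.exp (-((y - θ) / s))) ^ 2) y := by
    unfold sigFn
    simpa [one_div] using h2
  convert h3 using 1
  unfold sigFn'
  have h4 : s ≠ 0 := hs.ne'
  have h5 : (1 + Real.exp (-((y - θ) / s))) ≠ 0 := hden.ne'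
  field_simp

/-- For a single excitatory population with logistic-sigmoid response, the mean-field
system has no nonconstant periodic orbit in `D₁` whenever `β + γ > α·c/(4s)`. -/
theorem sigmoid_no_periodic_orbit
    (α β γ c Q θ s : ℝ) (hα : 0 < α) (hβ : 0 < β) (hγ : 0 < γ) (hc : 0 < c) (hs : 0 < s)
    (hcond : β + γ > α * c / (4 * s))
    (F : ℝ → ℝ) (hF : ∀ y, F y = 1 / (1 + Real.exp (-((y - θ) / s))))
    (A R : ℝ → ℝ)
    (hAode : ∀ t, HasDerivAt A (-β * A t + α * F (c * A t + Q) * (1 - A t - R t)) t)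
    (hRode : ∀ t, HasDerivAt R (-γ * R t + β * A t) t)
    (hdom : ∀ t, 0 ≤ A t ∧ 0 ≤ R t ∧ A t + R t ≤ 1)
    (T : ℝ) (hT : 0 < T) (hper : ∀ t, A (t + T) = A t ∧ R (t + T) = R t) :
    ∀ t u : ℝ, A t = A u ∧ R t = R u := by
  have hFs : ∀ y, F y = sigFn θ s y := fun y => by rw [hF]; rfl
  simp only [hFs] at hAode
  -- the derivative of A as a function of t
  obtain ⟨U, hU⟩ : ∃ U : ℝ → ℝ, U = fun t =>
      -β * A t + α * sigFn θ s (c * A t + Q) * (1 - A t - R t) := ⟨_, rfl⟩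
  have hUt : ∀ t, U t = -β * A t + α * sigFn θ s (c * A t + Q) * (1 - A t - R t) :=
    fun t => by rw [hU]
  have hA : ∀ t, HasDerivAt A (U t) t := by
    intro t
    have h := hAode t
    rw [← hUt t] at h
    exact h
  -- derivative of U
  have hUd : ∀ t, HasDerivAt U (-β * U t +
      (α * (sigFn' θ s (c * A t + Q) * (c * U t)) * (1 - A t - R t) +
        α * sigFn θ s (c * A t + Q) * (-(U t) - (-γ * R t + β * A t)))) t := by
    intro t
    have h1 : HasDerivAt (fun t => -β * A t) (-β * U t) t := (hA t).const_mul (-β)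
    have hX : HasDerivAt (fun t => c * A t + Q) (c * U t) t := ((hA t).const_mul c).add_const Q
    have h2 : HasDerivAt (fun t => sigFn θ s (c * A t + Q))
        (sigFn' θ s (c * A t + Q) * (c * U t)) t :=
      (sigFn_hasDerivAt θ s hs _).comp t hX
    have h3 := ((hasDerivAt_const t (1:ℝ)).sub (hA t)).sub (hRode t)
    rw [zero_sub] at h3
    have h4 := (h2.const_mul α).mul h3
    have h5 : HasDerivAt (fun t => -β * A t + α * sigFn θ s (c * A t + Q) * (1 - A t - R t))
        (-β * U t + (α * (sigFn' θ s (c * A t + Q) * (c * U t)) * (1 - A t - R t) +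
          α * sigFn θ s (c * A t + Q) * (-(U t) - (-γ * R t + β * A t)))) t := h1.add h4
    rw [← hU] at h5
    exact h5
  -- the potential function G
  obtain ⟨g, hg⟩ : ∃ g : ℝ → ℝ, g = fun a =>
      β * γ * a + α * sigFn θ s (c * a + Q) * (β * a - γ * (1 - a)) := ⟨_, rfl⟩
  have hgc : Continuous g := by
    rw [hg]
    have h1 : Continuous fun a : ℝ => sigFn θ s (c * a + Q) :=
      (sigFn_continuous θ s).comp (by fun_prop)
    have h2 : Continuous fun a : ℝ => β * γ * a := by fun_prop
    have h3 : Continuous fun a : ℝ => β * a - γ * (1 - a) := by fun_prop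
    exact h2.add ((continuous_const.mul h1).mul h3)
  obtain ⟨G, hG⟩ : ∃ G : ℝ → ℝ, G = fun a => ∫ x in (0:ℝ)..a, g x := ⟨_, rfl⟩
  have hGd : ∀ a, HasDerivAt G (g a) a := by
    intro a
    have h := (hgc.integral_hasStrictDerivAt 0 a).hasDerivAt
    rw [← hG] at h
    exact h
  -- the Lyapunov function V
  obtain ⟨V, hV⟩ : ∃ V : ℝ → ℝ, V = fun t => U t ^ 2 / 2 + G (A t) := ⟨_, rfl⟩
  have hVd : ∀ t, HasDerivAt V
      (-(β + γ + α * sigFn θ s (c * A t + Q)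
          - α * c * sigFn' θ s (c * A t + Q) * (1 - A t - R t)) * U t ^ 2) t := by
    intro t
    have h1 := ((hUd t).pow 2).div_const 2
    have h2 : HasDerivAt (fun t => G (A t)) (g (A t) * U t) t := (hGd (A t)).comp t (hA t)
    have h3 : HasDerivAt (fun t => U t ^ 2 / 2 + G (A t))
        ((2 : ℕ) * U t ^ (2 - 1) * (-β * U t +
          (α * (sigFn' θ s (c * A t + Q) * (c * U t)) * (1 - A t - R t) +
            α * sigFn θ s (c * A t + Q) * (-(U t) - (-γ * R t + β * A t)))) / 2
          + g (A t) * U t) t := h1.add h2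
    rw [← hV] at h3
    convert h3 using 1
    have key : α * sigFn θ s (c * A t + Q) * (1 - A t - R t) = U t + β * A t := by
      rw [hUt t]; ring
    simp only [hg]
    push_cast
    linear_combination (γ * U t) * key
  -- positivity of the damping coefficient
  have hDpos : ∀ t, 0 < β + γ + α * sigFn θ s (c * A t + Q)
      - α * c * sigFn' θ s (c * A t + Q) * (1 - A t - R t) := by
    intro t
    have hP0 : 0 ≤ 1 - A t - R t := by have := (hdom t).2.2; linarith
    have hP1 : 1 - A t - R t ≤ 1 := by
      have h1 := (hdom t).1; have h2 := (hdom t).2.1; linarith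
    have hSd0 := sigFn'_nonneg θ s hs (c * A t + Q)
    have hSdle := sigFn'_le θ s hs (c * A t + Q)
    have hSpos := sigFn_pos θ s (c * A t + Q)
    have hαS : 0 < α * sigFn θ s (c * A t + Q) := mul_pos hα hSpos
    have h1 : α * c * sigFn' θ s (c * A t + Q) * (1 - A t - R t)
        ≤ α * c * sigFn' θ s (c * A t + Q) * 1 :=
      mul_le_mul_of_nonneg_left hP1 (by positivity)
    have h2 : α * c * sigFn' θ s (c * A t + Q) ≤ α * c * (1 / (4 * s)) := by
      have := mul_le_mul_of_nonneg_left hSdle (le_of_lt (mul_pos hα hc))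
      calc α * c * sigFn' θ s (c * A t + Q) = α * c * sigFn' θ s (c * A t + Q) := rfl
        _ ≤ α * c * (1 / (4 * s)) := this
    have h3 : α * c * (1 / (4 * s)) = α * c / (4 * s) := by ring
    linarith
  -- V is antitone
  have hVdiff : Differentiable ℝ V := fun t => (hVd t).differentiableAt
  have hmono : Antitone V := by
    apply antitone_of_deriv_nonpos hVdiff
    intro t
    rw [(hVd t).deriv]
    have h1 := mul_nonneg (hDpos t).le (sq_nonneg (U t))
    linarith
  -- periodicity of U and V
  have hUper : ∀ t, U (t + T) = U t := by
    intro t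
    rw [hUt, hUt, (hper t).1, (hper t).2]
  have hVper : ∀ t, V (t + T) = V t := by
    intro t
    simp only [hV]
    rw [hUper t, (hper t).1]
  have hVn : ∀ n : ℕ, ∀ t, V (t + n * T) = V t := by
    intro n
    induction n with
    | zero => intro t; simp
    | succ k ih =>
      intro t
      have h : t + ((k + 1 : ℕ) : ℝ) * T = (t + T) + (k : ℝ) * T := by push_cast; ring
      rw [h, ih, hVper]
  -- V is constant
  have hVconst : ∀ t, V t = V 0 := by
    intro t
    rcases le_total 0 t with h | h
    · have hn : t ≤ (⌈t / T⌉₊ : ℝ) * T := by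
        rw [← div_le_iff₀ hT]; exact Nat.le_ceil _
      have h1 : V t ≤ V 0 := hmono h
      have h2 : V 0 ≤ V t := by
        have h3 := hVn ⌈t / T⌉₊ 0
        rw [zero_add] at h3
        calc V 0 = V ((⌈t / T⌉₊ : ℝ) * T) := h3.symm
          _ ≤ V t := hmono hn
      linarith
    · have hn : 0 ≤ t + (⌈-t / T⌉₊ : ℝ) * T := by
        have h1 : -t ≤ (⌈-t / T⌉₊ : ℝ) * T := by
          rw [← div_le_iff₀ hT]; exact Nat.le_ceil _
        linarith
      have h1 : V 0 ≤ V t := hmono h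
      have h2 : V t ≤ V 0 := by
        calc V t = V (t + (⌈-t / T⌉₊ : ℝ) * T) := (hVn _ t).symm
          _ ≤ V 0 := hmono hn
      linarith
  -- hence U ≡ 0
  have hVc : V = fun _ => V 0 := funext hVconst
  have hUzero : ∀ t, U t = 0 := by
    intro t
    have h0 := hasDerivAt_const t (V 0)
    rw [← hVc] at h0
    have huni := (hVd t).unique h0
    have hD := hDpos t
    have h2 : U t ^ 2 = 0 := by
      rcases mul_eq_zero.mp huni with h | h
      · exact absurd h (neg_ne_zero.mpr (ne_of_gt hD))
      · exact h
    exact sq_eq_zero_iff.mp h2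
  -- A is constant
  have hA0 : ∀ t, HasDerivAt A 0 t := fun t => hUzero t ▸ hA t
  have hAconst : ∀ t t' : ℝ, A t = A t' := fun t t' =>
    is_const_of_deriv_eq_zero (fun x => (hA0 x).differentiableAt) (fun x => (hA0 x).deriv) t t'
  -- conclude
  intro t t'
  refine ⟨hAconst t t', ?_⟩
  have e : ∀ t, -β * A t + α * sigFn θ s (c * A t + Q) * (1 - A t - R t) = 0 := by
    intro t
    rw [← hUt t]
    exact hUzero t
  have e1 := e t
  have e2 := e t'
  have hAeq := hAconst t t'
  rw [hAeq] at e1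
  have hSpos := sigFn_pos θ s (c * A t' + Q)
  have h3 : α * sigFn θ s (c * A t' + Q) * (R t' - R t) = 0 := by
    linear_combination e1 - e2
  rcases mul_eq_zero.mp h3 with h | h
  · exact absurd h (ne_of_gt (mul_pos hα hSpos))
  · linarith
end
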